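/- Define f̄_T(x) = -Ψ(1)Φ(x₁) + Σ_{i=2}^{T} [Ψ(-x_{i-1})Φ(-x_i) - Ψ(x_{i-1})Φ(x_i)] on ℝ^T. If x ∈ ℝ^T satisfies |x_i| < 1 for some i ≤ T, then there exists j ≤ i with |x_j| < 1 and |∂f̄_T/∂x_j (x)| > 1; in particular ‖∇f̄_T(x)‖ > 1. -/

import Mathlib

open scoped BigOperators

/-- Ψ(x) = 0 for x ≤ 1/2 and exp(1 - 1/(2x-1)²) for x > 1/2. -/
noncomputable def Psi (x : ℝ) : ℝ :=
  if x ≤ 1/2 then 0 else Real.exp (1 - 1 / (2*x - 1)^2)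

/-- Φ(y) = √e · ∫_{-∞}^y e^{-t²/2} dt. -/
noncomputable def Phi (y : ℝ) : ℝ :=
  Real.sqrt (Real.exp 1) * ∫ t in Set.Iic y, Real.exp (-t^2/2)

/-- pointwise derivative of Psi -/
noncomputable def Psi' (x : ℝ) : ℝ :=
  if x ≤ 1/2 then 0 else Real.exp (1 - 1 / (2*x - 1)^2) * (4 / (2*x - 1)^3)

lemma Psi_nonneg (x : ℝ) : 0 ≤ Psi x := by
  unfold Psi; split
  · exact le_rfl
  · exact (Real.exp_pos _).le

lemma Psi'_nonneg (x : ℝ) : 0 ≤ Psi' x := by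
  unfold Psi'; split
  · exact le_rfl
  · rename_i h
    push_neg at h
    have h1 : (0:ℝ) < 2*x - 1 := by linarith
    positivity

lemma Psi_one : Psi 1 = 1 := by
  unfold Psi; norm_num

lemma one_le_Psi {x : ℝ} (hx : 1 ≤ x) : 1 ≤ Psi x := by
  unfold Psi
  rw [if_neg (by linarith)]
  rw [show (1:ℝ) = Real.exp 0 by simp]
  apply Real.exp_le_exp.mpr
  have h1 : (1:ℝ) ≤ 2*x - 1 := by linarith
  have h2 : (1:ℝ) ≤ (2*x-1)^2 := by nlinarith
  have : 1 / (2*x-1)^2 ≤ 1 := by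
    rw [div_le_one (by linarith)]; exact h2
  simp only [Real.exp_zero]
  linarith

lemma Psi_le (x : ℝ) : Psi x ≤ Real.exp 1 * (2*x - 1)^2 := by
  unfold Psi; split
  · positivity
  · rename_i h
    push_neg at h
    have hu : (0:ℝ) < (2*x-1)^2 := by nlinarith
    rw [Real.exp_sub, div_le_iff₀ (Real.exp_pos _)]
    rw [mul_assoc]
    nth_rewrite 1 [← mul_one (Real.exp 1)]
    apply mul_le_mul_of_nonneg_left _ (Real.exp_pos 1).le
    calc (1:ℝ) = (1 / (2*x-1)^2) * (2*x-1)^2 := (one_div_mul_cancel hu.ne').symm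
    _ ≤ Real.exp (1 / (2*x-1)^2) * (2*x-1)^2 := by
        apply mul_le_mul_of_nonneg_right _ hu.le
        linarith [Real.add_one_le_exp (1 / (2*x-1)^2), Real.exp_pos (1 / (2*x-1)^2)]
    _ = (2*x-1)^2 * Real.exp (1 / (2*x-1)^2) := mul_comm _ _

lemma hasDerivAt_Psi (x : ℝ) : HasDerivAt Psi (Psi' x) x := by
  rcases lt_trichotomy x (1/2) with hx | hx | hx
  · -- x < 1/2 : locally zero
    have h0 : Psi' x = 0 := by unfold Psi'; rw [if_pos hx.le]
    rw [h0]
    have : Set.EqOn Psi (fun _ => (0:ℝ)) (Set.Iio (1/2)) := by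
      intro y hy; unfold Psi; rw [if_pos (le_of_lt hy)]
    exact (hasDerivAt_const x 0).congr_of_eventuallyEq
      (Filter.eventuallyEq_of_mem (Iio_mem_nhds hx) this)
  · -- x = 1/2 : squeeze
    subst hx
    have h0 : Psi' (1/2) = 0 := by unfold Psi'; rw [if_pos le_rfl]
    rw [h0, hasDerivAt_iff_isLittleO]
    have hPsihalf : Psi (1/2) = 0 := by unfold Psi; rw [if_pos le_rfl]
    rw [Asymptotics.isLittleO_iff]
    intro ε hε
    have hepos : (0:ℝ) < Real.exp 1 := Real.exp_pos 1
    have hδ : (0:ℝ) < ε / (4 * Real.exp 1) := by positivity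
    filter_upwards [Metric.ball_mem_nhds (1/2 : ℝ) hδ] with y hy
    rw [Real.ball_eq_Ioo] at hy
    have hbound : Psi y ≤ (4 * Real.exp 1) * |y - 1/2| ^ 2 := by
      have := Psi_le y
      have h2 : (2*y - 1)^2 = 4 * (y - 1/2)^2 := by ring
      calc Psi y ≤ Real.exp 1 * (2*y-1)^2 := this
      _ = (4 * Real.exp 1) * (y - 1/2)^2 := by rw [h2]; ring
      _ = (4 * Real.exp 1) * |y - 1/2| ^ 2 := by rw [sq_abs]
    have habs : |y - 1/2| ≤ ε / (4 * Real.exp 1) := by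
      rw [abs_le]; constructor <;> [linarith [hy.1]; linarith [hy.2]]
    simp only [hPsihalf, smul_zero, sub_zero, smul_eq_mul, mul_zero]
    rw [Real.norm_eq_abs, Real.norm_eq_abs,
      abs_of_nonneg (Psi_nonneg y)]
    calc Psi y ≤ (4 * Real.exp 1) * |y - 1/2| ^ 2 := hbound
    _ = ((4 * Real.exp 1) * |y - 1/2|) * |y - 1/2| := by ring
    _ ≤ ε * |y - 1/2| := by
        apply mul_le_mul_of_nonneg_right _ (abs_nonneg _)
        rw [mul_comm]
        exact (le_div_iff₀ (by positivity)).mp habs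
  · -- x > 1/2 : smooth part
    have key : HasDerivAt (fun y => Real.exp (1 - 1 / (2*y - 1)^2))
        (Real.exp (1 - 1 / (2*x - 1)^2) * (4 / (2*x - 1)^3)) x := by
      have hne : (2*x - 1) ≠ 0 := by intro h; nlinarith
      have h1 : HasDerivAt (fun y : ℝ => 2*y - 1) 2 x := by
        simpa using ((hasDerivAt_id x).const_mul 2).sub_const 1
      have h2 : HasDerivAt (fun y : ℝ => (2*y - 1)^2) (2 * (2*x-1) * 2) x := by
        simpa [mul_comm] using (h1.fun_pow 2)
      have h3 : HasDerivAt (fun y : ℝ => 1 / (2*y - 1)^2)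
          (-(2 * (2*x-1) * 2) / ((2*x-1)^2)^2) x := by
        simpa [one_div] using h2.fun_inv (pow_ne_zero 2 hne)
      have h4 : HasDerivAt (fun y : ℝ => 1 - 1 / (2*y - 1)^2)
          (-((-(2 * (2*x-1) * 2)) / ((2*x-1)^2)^2)) x := by
        simpa using (hasDerivAt_const x (1:ℝ)).fun_sub h3
      have h5 := h4.exp
      convert h5 using 1
      field_simp
      ring
    have heq : Set.EqOn Psi (fun y => Real.exp (1 - 1 / (2*y - 1)^2)) (Set.Ioi (1/2)) := by
      intro y hy; unfold Psi; rw [if_neg (not_le.mpr hy)]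
    have h0 : Psi' x = Real.exp (1 - 1 / (2*x - 1)^2) * (4 / (2*x - 1)^3) := by
      unfold Psi'; rw [if_neg (not_le.mpr hx)]
    rw [h0]
    exact key.congr_of_eventuallyEq (Filter.eventuallyEq_of_mem (Ioi_mem_nhds hx) heq)

noncomputable def Phi' (y : ℝ) : ℝ := Real.sqrt (Real.exp 1) * Real.exp (-y^2/2)

lemma gauss_integrable : MeasureTheory.Integrable (fun t : ℝ => Real.exp (-t^2/2)) := by
  have := integrable_exp_neg_mul_sq (by norm_num : (0:ℝ) < 1/2)
  convert this using 2 with t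
  ring_nf

lemma Phi_nonneg (y : ℝ) : 0 ≤ Phi y := by
  unfold Phi
  apply mul_nonneg (Real.sqrt_nonneg _)
  exact MeasureTheory.integral_nonneg fun t => (Real.exp_pos _).le

lemma hasDerivAt_Phi (y : ℝ) : HasDerivAt Phi (Phi' y) y := by
  have hint : ∀ a b : ℝ, IntervalIntegrable (fun t => Real.exp (-t^2/2)) MeasureTheory.volume a b :=
    fun a b => gauss_integrable.intervalIntegrable
  have hcont : Continuous (fun t : ℝ => Real.exp (-t^2/2)) := by continuity
  have key : ∀ z : ℝ, Phi z = Real.sqrt (Real.exp 1) *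
      ((∫ t in Set.Iic (0:ℝ), Real.exp (-t^2/2)) + ∫ t in (0:ℝ)..z, Real.exp (-t^2/2)) := by
    intro z
    unfold Phi
    congr 1
    rw [← intervalIntegral.integral_Iic_sub_Iic (gauss_integrable.integrableOn)
      (gauss_integrable.integrableOn)]
    ring
  have hd : HasDerivAt (fun z => ∫ t in (0:ℝ)..z, Real.exp (-t^2/2)) (Real.exp (-y^2/2)) y :=
    intervalIntegral.integral_hasDerivAt_right (hint 0 y)
      (hcont.stronglyMeasurableAtFilter _ _) hcont.continuousAt
  have : HasDerivAt (fun z => Real.sqrt (Real.exp 1) *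
      ((∫ t in Set.Iic (0:ℝ), Real.exp (-t^2/2)) + ∫ t in (0:ℝ)..z, Real.exp (-t^2/2)))
      (Real.sqrt (Real.exp 1) * Real.exp (-y^2/2)) y := by
    exact (((hasDerivAt_const y _).add hd).const_mul _).congr_deriv (by ring)
  exact this.congr_of_eventuallyEq (Filter.Eventually.of_forall fun z => (key z)) |>.congr_deriv rfl

lemma one_lt_Phi' {y : ℝ} (hy : |y| < 1) : 1 < Phi' y := by
  unfold Phi'
  rw [← Real.exp_half, ← Real.exp_add]
  have h2 : y^2 < 1 := by nlinarith [abs_nonneg y, sq_abs y, abs_lt.mp hy]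
  calc (1:ℝ) = Real.exp 0 := (Real.exp_zero).symm
  _ < Real.exp (1/2 + -y^2/2) := Real.exp_lt_exp.mpr (by nlinarith)

lemma Phi'_pos (y : ℝ) : 0 < Phi' y := by
  unfold Phi'
  have : (0:ℝ) < Real.sqrt (Real.exp 1) := Real.sqrt_pos.mpr (Real.exp_pos 1)
  positivity


/-- The Nesterov-style hard instance f̄_T (0-indexed coordinates). -/
noncomputable def fbar (T : ℕ) (x : Fin T → ℝ) : ℝ :=
  ∑ i : Fin T,
    if (i : ℕ) = 0 then -(Psi 1 * Phi (x i))
    else Psi (-(x ⟨i.1 - 1, lt_of_le_of_lt (Nat.sub_le _ _) i.isLt⟩)) * Phi (-(x i))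
         - Psi (x ⟨i.1 - 1, lt_of_le_of_lt (Nat.sub_le _ _) i.isLt⟩) * Phi (x i)

/-- j-th partial derivative of f̄_T at x. -/
noncomputable def fpartial (T : ℕ) (x : Fin T → ℝ) (j : Fin T) : ℝ :=
  deriv (fun s => fbar T (Function.update x j s)) (x j)

noncomputable def dterm (T : ℕ) (x : Fin T → ℝ) (j i : Fin T) : ℝ :=
  if i = j then
    (if (j : ℕ) = 0 then -(Psi 1 * Phi' (x j))
     else -(Psi (-(x ⟨j.1 - 1, lt_of_le_of_lt (Nat.sub_le _ _) j.isLt⟩)) * Phi' (-(x j))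
            + Psi (x ⟨j.1 - 1, lt_of_le_of_lt (Nat.sub_le _ _) j.isLt⟩) * Phi' (x j)))
  else if (i : ℕ) = (j : ℕ) + 1 then
    -(Psi' (-(x j)) * Phi (-(x i)) + Psi' (x j) * Phi (x i))
  else 0

lemma hasDerivAt_fbar_update (T : ℕ) (x : Fin T → ℝ) (j : Fin T) :
    HasDerivAt (fun s => fbar T (Function.update x j s)) (∑ i : Fin T, dterm T x j i) (x j) := by
  have main : ∀ i : Fin T, HasDerivAt (fun s =>
      if (i : ℕ) = 0 then -(Psi 1 * Phi (Function.update x j s i))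
      else Psi (-(Function.update x j s ⟨i.1 - 1, lt_of_le_of_lt (Nat.sub_le _ _) i.isLt⟩))
             * Phi (-(Function.update x j s i))
           - Psi (Function.update x j s ⟨i.1 - 1, lt_of_le_of_lt (Nat.sub_le _ _) i.isLt⟩)
             * Phi (Function.update x j s i)) (dterm T x j i) (x j) := by
    intro i
    by_cases h0 : (i : ℕ) = 0
    · simp only [if_pos h0]
      by_cases hij : i = j
      · subst hij
        simp only [Function.update_self]
        have hd : dterm T x i i = -(Psi 1 * Phi' (x i)) := by
          unfold dterm; rw [if_pos rfl, if_pos h0]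
        rw [hd]
        exact ((hasDerivAt_Phi (x i)).const_mul (Psi 1)).neg
      · simp only [Function.update_of_ne hij]
        have hd : dterm T x j i = 0 := by
          unfold dterm
          rw [if_neg hij, if_neg (by omega)]
        rw [hd]
        exact hasDerivAt_const _ _
    · simp only [if_neg h0]
      set p : Fin T := ⟨i.1 - 1, lt_of_le_of_lt (Nat.sub_le _ _) i.isLt⟩ with hp
      by_cases hij : i = j
      · subst hij
        have hpj : p ≠ i := by
          intro h
          have := congrArg Fin.val h
          simp only [hp] at this
          omega
        simp only [Function.update_self, Function.update_of_ne hpj]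
        have hd : dterm T x i i = -(Psi (-(x p)) * Phi' (-(x i)) + Psi (x p) * Phi' (x i)) := by
          unfold dterm; rw [if_pos rfl, if_neg h0]
        rw [hd]
        have h1 : HasDerivAt (fun s : ℝ => Phi (-s)) (Phi' (-(x i)) * (-1)) (x i) :=
          (hasDerivAt_Phi (-(x i))).comp (x i) (hasDerivAt_neg (x i))
        have h2 : HasDerivAt (fun s : ℝ => Psi (-(x p)) * Phi (-s) - Psi (x p) * Phi s)
            (Psi (-(x p)) * (Phi' (-(x i)) * (-1)) - Psi (x p) * Phi' (x i)) (x i) :=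
          (h1.const_mul _).sub ((hasDerivAt_Phi (x i)).const_mul _)
        exact h2.congr_deriv (by ring)
      · by_cases hsucc : (i : ℕ) = (j : ℕ) + 1
        · have hpj : p = j := by
            apply Fin.ext
            simp only [hp]
            omega
          have hupd : ∀ s : ℝ, Function.update x j s p = s := by
            intro s; rw [hpj, Function.update_self]
          simp only [hupd, Function.update_of_ne hij]
          have hd : dterm T x j i = -(Psi' (-(x j)) * Phi (-(x i)) + Psi' (x j) * Phi (x i)) := by
            unfold dterm; rw [if_neg hij, if_pos hsucc]
          rw [hd]
          have h1 : HasDerivAt (fun s : ℝ => Psi (-s)) (Psi' (-(x j)) * (-1)) (x j) :=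
            (hasDerivAt_Psi (-(x j))).comp (x j) (hasDerivAt_neg (x j))
          have h2 : HasDerivAt (fun s : ℝ => Psi (-s) * Phi (-(x i)) - Psi s * Phi (x i))
              ((Psi' (-(x j)) * (-1)) * Phi (-(x i)) - Psi' (x j) * Phi (x i)) (x j) :=
            (h1.mul_const _).sub ((hasDerivAt_Psi (x j)).mul_const _)
          exact h2.congr_deriv (by ring)
        · have hpj : p ≠ j := by
            intro h
            have := congrArg Fin.val h
            simp only [hp] at this
            omega
          simp only [Function.update_of_ne hij, Function.update_of_ne hpj]
          have hd : dterm T x j i = 0 := by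
            unfold dterm; rw [if_neg hij, if_neg hsucc]
          rw [hd]
          exact hasDerivAt_const _ _
  have := HasDerivAt.fun_sum (u := Finset.univ) (fun i _ => main i)
  exact this

lemma fpartial_eq (T : ℕ) (x : Fin T → ℝ) (j : Fin T) :
    fpartial T x j = ∑ i : Fin T, dterm T x j i :=
  (hasDerivAt_fbar_update T x j).deriv

lemma dterm_nonpos (T : ℕ) (x : Fin T → ℝ) (j i : Fin T) : dterm T x j i ≤ 0 := by
  unfold dterm
  split
  · split
    · simp only [neg_nonpos]
      exact mul_nonneg (Psi_nonneg _) (Phi'_pos _).le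
    · simp only [neg_nonpos]
      have := Psi_nonneg (-(x ⟨j.1 - 1, lt_of_le_of_lt (Nat.sub_le _ _) j.isLt⟩))
      have := Psi_nonneg (x ⟨j.1 - 1, lt_of_le_of_lt (Nat.sub_le _ _) j.isLt⟩)
      have := (Phi'_pos (-(x j))).le
      have := (Phi'_pos (x j)).le
      positivity
  · split
    · simp only [neg_nonpos]
      have := Psi'_nonneg (-(x j)); have := Psi'_nonneg (x j)
      have := Phi_nonneg (-(x i)); have := Phi_nonneg (x i)
      positivity
    · exact le_rfl

/-- If some coordinate of x (among the first i) has |x_i| < 1, then some partial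
derivative at an index j ≤ i with |x_j| < 1 exceeds 1 in absolute value; in
particular the gradient norm exceeds 1. -/
theorem stmt_5 (T : ℕ) (hT : 1 ≤ T) (x : Fin T → ℝ) (i : Fin T) (hi : |x i| < 1) :
    (∃ j : Fin T, j ≤ i ∧ |x j| < 1 ∧ 1 < |fpartial T x j|) ∧
      1 < Real.sqrt (∑ j : Fin T, (fpartial T x j)^2) := by
  classical
  -- find the minimal index with |x_j| < 1
  have hP : ∃ n : ℕ, ∃ h : n < T, |x ⟨n, h⟩| < 1 := ⟨i.1, i.isLt, by simpa using hi⟩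
  set n0 := Nat.find hP with hn0
  obtain ⟨hn0T, hxn0⟩ := Nat.find_spec hP
  set j : Fin T := ⟨n0, hn0T⟩ with hj
  have hji : j ≤ i := by
    rw [Fin.le_def]
    exact Nat.find_le ⟨i.isLt, by simpa using hi⟩
  have hxj : |x j| < 1 := hxn0
  -- the key bound : dterm T x j j < -1
  have hkey : dterm T x j j < -1 := by
    unfold dterm
    rw [if_pos rfl]
    by_cases h0 : (j : ℕ) = 0
    · rw [if_pos h0, Psi_one, one_mul]
      have := one_lt_Phi' hxj
      linarith
    · rw [if_neg h0]
      set p : Fin T := ⟨j.1 - 1, lt_of_le_of_lt (Nat.sub_le _ _) j.isLt⟩ with hpdef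
      have hplt : (p : ℕ) < n0 := by
        have hjv : (j : ℕ) = n0 := rfl
        have hpv : (p : ℕ) = (j : ℕ) - 1 := rfl
        omega
      have hpbig : ¬ |x ⟨(p : ℕ), p.isLt⟩| < 1 := by
        have := Nat.find_min hP hplt
        push_neg at this
        intro hcon
        exact absurd hcon (by simpa using this p.isLt)
      have hpbig' : 1 ≤ |x p| := by
        push_neg at hpbig
        simpa using hpbig
      rcases le_abs'.mp hpbig' with ha | ha
      · -- x p ≤ -1 : use Psi (-(x p)) ≥ 1 and Phi' (-(x j)) > 1
        have h1 : 1 ≤ Psi (-(x p)) := one_le_Psi (by linarith)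
        have h2 : 1 < Phi' (-(x j)) := one_lt_Phi' (by rwa [abs_neg])
        have h3 : 0 ≤ Psi (x p) := Psi_nonneg _
        have h4 : 0 < Phi' (x j) := Phi'_pos _
        nlinarith
      · have h1 : 1 ≤ Psi (x p) := one_le_Psi ha
        have h2 : 1 < Phi' (x j) := one_lt_Phi' hxj
        have h3 : 0 ≤ Psi (-(x p)) := Psi_nonneg _
        have h4 : 0 < Phi' (-(x j)) := Phi'_pos _
        nlinarith
  -- sum bound
  have hsum : fpartial T x j ≤ dterm T x j j := by
    rw [fpartial_eq]
    calc ∑ k : Fin T, dterm T x j k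
        ≤ ∑ k : Fin T, (if k = j then dterm T x j j else 0) := by
          apply Finset.sum_le_sum
          intro k _
          by_cases hk : k = j
          · subst hk; simp
          · rw [if_neg hk]; exact dterm_nonpos T x j k
    _ = dterm T x j j := by simp
  have hlt : fpartial T x j < -1 := lt_of_le_of_lt hsum hkey
  have habs : 1 < |fpartial T x j| := by
    rw [abs_of_neg (by linarith)]
    linarith
  refine ⟨⟨j, hji, hxj, habs⟩, ?_⟩
  have h1 : (fpartial T x j)^2 ≤ ∑ k : Fin T, (fpartial T x k)^2 :=
    Finset.single_le_sum (f := fun k => (fpartial T x k)^2) (fun k _ => sq_nonneg _)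
      (Finset.mem_univ j)
  calc (1:ℝ) < |fpartial T x j| := habs
  _ = Real.sqrt ((fpartial T x j)^2) := (Real.sqrt_sq_eq_abs _).symm
  _ ≤ Real.sqrt (∑ k : Fin T, (fpartial T x k)^2) := Real.sqrt_le_sqrt h1
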